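/- Let σ² > 0, c > 0 and γ > σ²√c, let m be the Marcenko–Pastur Stieltjes transform with parameters (σ², c), and set x_γ = (γ + σ²)(γ + σ²c)/γ. Then the real function x ↦ m(x) is differentiable at x_γ with m′(x_γ) = γ² / ((γ + σ²c)²(γ² − σ⁴c)); the function m̃(x) = −1/(x(1 + σ²c·m(x))) is differentiable at x_γ with m̃′(x_γ) = γ² / ((γ + σ²)²(γ² − σ⁴c)); and the function τ(x) = x·m(x)·m̃(x) is differentiable at x_γ with τ′(x_γ) = −1/(γ² − σ⁴c). -/

import Mathlib

/-- The Marcenko–Pastur Stieltjes transform with parameters `(σ² = s, c)`. -/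
noncomputable def mpStieltjes (s c : ℝ) (z : ℂ) : ℂ :=
  (∫ l in (s * (1 - Real.sqrt c) ^ 2)..(s * (1 + Real.sqrt c) ^ 2),
      (↑(Real.sqrt ((l - s * (1 - Real.sqrt c) ^ 2) * (s * (1 + Real.sqrt c) ^ 2 - l)) /
          (2 * Real.pi * s * c * l)) : ℂ) * (1 / ((l : ℂ) - z)))
    - (↑(max (1 - 1 / c) 0) : ℂ) / z

/-- `m̃(z) = −1/(z(1 + σ²c·m(z)))`. -/
noncomputable def mpMtilde (s c : ℝ) (z : ℂ) : ℂ :=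
  -1 / (z * (1 + (s : ℂ) * (c : ℂ) * mpStieltjes s c z))

/-- `τ(z) = z·m(z)·m̃(z)`. -/
noncomputable def mpTau (s c : ℝ) (z : ℂ) : ℂ :=
  z * mpStieltjes s c z * mpMtilde s c z

open Real intervalIntegral MeasureTheory

/-- Integrability of the semicircle Cauchy kernel, including the boundary case `p = r`. -/
lemma KintInt (r p : ℝ) (hr : 0 < r) (hp : r ≤ p) :
    IntervalIntegrable (fun u => Real.sqrt (r^2 - u^2) / (p - u)) volume (-r) r := by
  rcases eq_or_lt_of_le hp with hpr | hpr
  · obtain rfl : p = r := hpr.symm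
    have hbase : IntervalIntegrable (fun x : ℝ => x ^ (-(1/2) : ℝ)) volume 0 (2*p) :=
      intervalIntegrable_rpow' (by norm_num)
    have hrefl := (hbase.comp_sub_left p)
    have hg : IntervalIntegrable (fun x : ℝ => Real.sqrt (2*p) * (p - x) ^ (-(1/2) : ℝ))
        volume (-p) p := by
      have h2 := (hrefl.symm.const_mul (Real.sqrt (2*p)))
      have e : p - 2*p = -p := by ring
      rw [e, sub_zero] at h2
      exact h2
    refine hg.mono_fun ?_ ?_
    · exact ((Real.continuous_sqrt.comp
        (continuous_const.sub (continuous_pow 2))).measurable.div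
        (continuous_const.sub continuous_id).measurable).aestronglyMeasurable
    · rw [Filter.EventuallyLE, ae_restrict_iff' measurableSet_uIoc]
      refine Filter.Eventually.of_forall fun u hu => ?_
      rw [Set.uIoc_of_le (by linarith)] at hu
      obtain ⟨hu1, hu2⟩ := hu
      have h1 : (0:ℝ) ≤ p - u := by linarith
      have h2 : (0:ℝ) ≤ p + u := by linarith
      have hsq : Real.sqrt (p^2 - u^2) = Real.sqrt (p + u) * Real.sqrt (p - u) := by
        rw [← Real.sqrt_mul h2]; ring_nf
      have hrpow : (p - u) ^ (-(1/2) : ℝ) = 1 / Real.sqrt (p - u) := by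
        rw [Real.rpow_neg h1, Real.sqrt_eq_rpow, one_div]
        rw [one_div]
      simp only [norm_eq_abs]
      rw [abs_of_nonneg (by positivity), abs_of_nonneg (by positivity), hsq, hrpow]
      rcases eq_or_lt_of_le h1 with h | h
      · rw [← h]; simp
      · have hsp : 0 < Real.sqrt (p - u) := Real.sqrt_pos.2 h
        rw [div_le_iff₀ h]
        have key : Real.sqrt (2*p) * (1 / Real.sqrt (p - u)) * (p - u)
            = Real.sqrt (2*p) * Real.sqrt (p - u) := by
          rw [one_div, mul_assoc]
          congr 1
          field_simp [hsp.ne']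
          rw [Real.sq_sqrt h1]
        rw [key]
        gcongr
        linarith
  · apply ContinuousOn.intervalIntegrable
    apply ContinuousOn.div
    · exact (Real.continuous_sqrt.comp (by continuity)).continuousOn
    · exact (continuous_const.sub continuous_id).continuousOn
    · intro u hu
      rw [Set.uIcc_of_le (by linarith)] at hu
      have := hu.2
      intro h; linarith [sub_eq_zero.mp h]

lemma Kint (r p : ℝ) (hr : 0 < r) (hp : r ≤ p) :
    ∫ u in (-r)..r, Real.sqrt (r^2 - u^2) / (p - u)
      = Real.pi * (p - Real.sqrt (p^2 - r^2)) := by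
  rcases eq_or_lt_of_le hp with hpr | hpr
  · -- boundary case p = r
    obtain rfl : p = r := hpr.symm
    set G : ℝ → ℝ := fun u => p * Real.arcsin (u/p) - Real.sqrt (p^2 - u^2) with hG
    have hcont : ContinuousOn G (Set.Icc (-p) p) := by
      apply ContinuousOn.sub
      · exact (continuous_const.mul (Real.continuous_arcsin.comp
          (continuous_id.div_const p))).continuousOn
      · exact (Real.continuous_sqrt.comp
          (continuous_const.sub (continuous_pow 2))).continuousOn
    have hderiv : ∀ u ∈ Set.Ioo (-p) p,
        HasDerivAt G (Real.sqrt (p^2 - u^2) / (p - u)) u := by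
      intro u hu
      obtain ⟨hu1, hu2⟩ := hu
      have hq : (0:ℝ) < p^2 - u^2 := by nlinarith
      have ht : 0 < Real.sqrt (p^2 - u^2) := Real.sqrt_pos.2 hq
      have hpu' : (0:ℝ) < p - u := by linarith
      have h1 : HasDerivAt (fun u : ℝ => u / p) (1/p) u := by
        simpa using (hasDerivAt_id u).div_const p
      have harc : HasDerivAt (fun u : ℝ => Real.arcsin (u/p))
          (1 / Real.sqrt (1 - (u/p)^2) * (1/p)) u :=
        (Real.hasDerivAt_arcsin
          (by intro h; rw [div_eq_iff hr.ne'] at h; nlinarith)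
          (by intro h; rw [div_eq_iff hr.ne'] at h; nlinarith)).comp u h1
      have hsq : HasDerivAt (fun u : ℝ => Real.sqrt (p^2 - u^2))
          (1 / (2 * Real.sqrt (p^2 - u^2)) * (-(2*u))) u := by
        have hin : HasDerivAt (fun u : ℝ => p^2 - u^2) (-(2*u)) u := by
          simpa using (hasDerivAt_pow 2 u).const_sub (p^2)
        exact (Real.hasDerivAt_sqrt hq.ne').comp u hin
      have hcomb := ((harc.const_mul p).sub hsq)
      refine hcomb.congr_deriv ?_
      have e1 : Real.sqrt (1 - (u/p)^2) = Real.sqrt (p^2 - u^2) / p := by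
        rw [show 1 - (u/p)^2 = (p^2-u^2)/p^2 by field_simp,
          Real.sqrt_div hq.le, Real.sqrt_sq hr.le]
      have key : Real.sqrt (p^2-u^2)/(p-u) = (p+u)/Real.sqrt (p^2-u^2) := by
        rw [div_eq_div_iff hpu'.ne' ht.ne']
        nlinarith [Real.sq_sqrt hq.le]
      rw [key, e1]
      field_simp
      ring
    have hFTC := intervalIntegral.integral_eq_sub_of_hasDeriv_right_of_le
      (by linarith : -p ≤ p) hcont
      (fun u hu => (hderiv u hu).hasDerivWithinAt) (KintInt p p hr le_rfl)
    rw [hFTC, hG]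
    simp only []
    rw [div_self hr.ne', neg_div, div_self hr.ne']
    simp [Real.arcsin_one, Real.arcsin_neg]
    ring
  · -- case p > r
    have hpu : ∀ u ∈ Set.Icc (-r) r, p - u ≠ 0 := by
      intro u hu h
      have := hu.2; nlinarith [sub_eq_zero.mp h]
    set A : ℝ → ℝ := fun u => (r^2 - p*u)/(r*(p - u)) with hA
    set G : ℝ → ℝ := fun u => p * Real.arcsin (u/r) - Real.sqrt (r^2 - u^2)
      + Real.sqrt (p^2 - r^2) * Real.arcsin (A u) with hG
    have hw : 0 < Real.sqrt (p^2 - r^2) := Real.sqrt_pos.2 (by nlinarith)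
    have hcont : ContinuousOn G (Set.Icc (-r) r) := by
      apply ContinuousOn.add
      · apply ContinuousOn.sub
        · exact (continuous_const.mul (Real.continuous_arcsin.comp
            (continuous_id.div_const r))).continuousOn
        · exact (Real.continuous_sqrt.comp
            (continuous_const.sub (continuous_pow 2))).continuousOn
      · apply ContinuousOn.mul continuousOn_const
        apply Real.continuous_arcsin.comp_continuousOn
        apply ContinuousOn.div
        · exact (continuous_const.sub (continuous_const.mul continuous_id)).continuousOn
        · exact (continuous_const.mul (continuous_const.sub continuous_id)).continuousOn
        · intro u hu
          exact mul_ne_zero hr.ne' (hpu u hu)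
    have hderiv : ∀ u ∈ Set.Ioo (-r) r,
        HasDerivAt G (Real.sqrt (r^2 - u^2) / (p - u)) u := by
      intro u hu
      obtain ⟨hu1, hu2⟩ := hu
      have hq : (0:ℝ) < r^2 - u^2 := by nlinarith
      have ht : 0 < Real.sqrt (r^2 - u^2) := Real.sqrt_pos.2 hq
      have hpu' : (0:ℝ) < p - u := by linarith
      have h1 : HasDerivAt (fun u : ℝ => u / r) (1/r) u := by
        simpa using (hasDerivAt_id u).div_const r
      have harc : HasDerivAt (fun u : ℝ => Real.arcsin (u/r))
          (1 / Real.sqrt (1 - (u/r)^2) * (1/r)) u :=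
        (Real.hasDerivAt_arcsin
          (by intro h; rw [div_eq_iff hr.ne'] at h; nlinarith)
          (by intro h; rw [div_eq_iff hr.ne'] at h; nlinarith)).comp u h1
      have hsq : HasDerivAt (fun u : ℝ => Real.sqrt (r^2 - u^2))
          (1 / (2 * Real.sqrt (r^2 - u^2)) * (-(2*u))) u := by
        have hin : HasDerivAt (fun u : ℝ => r^2 - u^2) (-(2*u)) u := by
          simpa using (hasDerivAt_pow 2 u).const_sub (r^2)
        exact (Real.hasDerivAt_sqrt hq.ne').comp u hin
      have hAd : HasDerivAt A ((r^2 - p^2)/(r*(p - u)^2)) u := by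
        have hnum : HasDerivAt (fun u : ℝ => r^2 - p*u) (-p) u := by
          simpa using ((hasDerivAt_id u).const_mul p).const_sub (r^2)
        have hden : HasDerivAt (fun u : ℝ => r*(p - u)) (-r) u := by
          simpa using ((hasDerivAt_const u p).sub (hasDerivAt_id u)).const_mul r
        have h2 := hnum.div hden (by positivity)
        refine h2.congr_deriv ?_
        rw [div_eq_div_iff (by positivity) (by positivity)]
        ring
      have hA1 : A u ≠ -1 := by
        intro h
        rw [hA] at h
        simp only [div_eq_iff (mul_ne_zero hr.ne' hpu'.ne')] at h
        nlinarith [mul_pos (show (0:ℝ) < p + r by linarith) (show (0:ℝ) < r - u by linarith)]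
      have hA2 : A u ≠ 1 := by
        intro h
        rw [hA] at h
        simp only [div_eq_iff (mul_ne_zero hr.ne' hpu'.ne')] at h
        nlinarith [mul_pos (show (0:ℝ) < p - r by linarith) (show (0:ℝ) < r + u by linarith)]
      have harcA : HasDerivAt (fun u : ℝ => Real.arcsin (A u))
          (1 / Real.sqrt (1 - (A u)^2) * ((r^2 - p^2)/(r*(p - u)^2))) u :=
        (Real.hasDerivAt_arcsin hA1 hA2).comp u hAd
      have hcomb := ((harc.const_mul p).sub hsq).add (harcA.const_mul (Real.sqrt (p^2 - r^2)))
      refine hcomb.congr_deriv ?_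
      have e1 : Real.sqrt (1 - (u/r)^2) = Real.sqrt (r^2 - u^2) / r := by
        rw [show 1 - (u/r)^2 = (r^2-u^2)/r^2 by field_simp,
          Real.sqrt_div hq.le, Real.sqrt_sq hr.le]
      have e2 : Real.sqrt (1 - (A u)^2)
          = Real.sqrt (p^2 - r^2) * Real.sqrt (r^2 - u^2) / (r*(p - u)) := by
        have h12 : 1 - (A u)^2 = ((p^2-r^2)*(r^2-u^2))/(r*(p - u))^2 := by
          rw [hA]
          field_simp
          ring
        rw [h12, Real.sqrt_div (mul_nonneg (by nlinarith) hq.le), Real.sqrt_mul (by nlinarith),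
          Real.sqrt_sq (le_of_lt (by positivity))]
      have key : Real.sqrt (r^2-u^2)/(p-u)
          = (p+u)/Real.sqrt (r^2-u^2) + (r^2-p^2)/(Real.sqrt (r^2-u^2)*(p-u)) := by
        have hsum : (p+u)/Real.sqrt (r^2-u^2) + (r^2-p^2)/(Real.sqrt (r^2-u^2)*(p-u))
            = ((p+u)*(p-u) + (r^2-p^2))/(Real.sqrt (r^2-u^2)*(p-u)) := by
          field_simp
        have hval : (p+u)*(p-u) + (r^2-p^2)
            = Real.sqrt (r^2-u^2) * Real.sqrt (r^2-u^2) := by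
          rw [Real.mul_self_sqrt hq.le]; ring
        rw [hsum, hval, mul_div_mul_left _ _ ht.ne']
      rw [key, e1, e2]
      field_simp
      ring
    have hFTC := intervalIntegral.integral_eq_sub_of_hasDeriv_right_of_le
      (by linarith : -r ≤ r) hcont
      (fun u hu => (hderiv u hu).hasDerivWithinAt) (KintInt r p hr hp)
    rw [hFTC, hG]
    simp only []
    have hAr : A r = -1 := by
      rw [hA]; simp only []
      rw [div_eq_iff (mul_ne_zero hr.ne' (sub_ne_zero.mpr hpr.ne'))]
      ring
    have hArn : A (-r) = 1 := by
      rw [hA]; simp only []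
      rw [div_eq_iff (mul_ne_zero hr.ne' (ne_of_gt (by linarith : (0:ℝ) < p - -r)))]
      ring
    rw [hAr, hArn, div_self hr.ne', neg_div, div_self hr.ne']
    simp [Real.arcsin_one, Real.arcsin_neg]
    ring

lemma Jint (a b x : ℝ) (hab : a < b) (hx : b ≤ x) :
    ∫ l in a..b, Real.sqrt ((l-a)*(b-l)) / (l-x)
      = Real.pi * ((a+b)/2 - x + Real.sqrt ((x-a)*(x-b))) := by
  set r := (b-a)/2 with hrdef
  set m := (a+b)/2 with hmdef
  have hr : 0 < r := by rw [hrdef]; linarith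
  have hshift : (∫ l in a..b, Real.sqrt ((l-a)*(b-l)) / (l-x))
      = ∫ u in (-r)..r, Real.sqrt ((u+m-a)*(b-(u+m))) / (u+m-x) := by
    rw [intervalIntegral.integral_comp_add_right (fun l => Real.sqrt ((l-a)*(b-l)) / (l-x)) m]
    congr 1 <;> (rw [hrdef, hmdef]; ring)
  rw [hshift]
  have heq : ∀ u : ℝ, Real.sqrt ((u+m-a)*(b-(u+m))) / (u+m-x)
      = -(Real.sqrt (r^2-u^2) / ((x-m) - u)) := by
    intro u
    rw [show (u+m-a)*(b-(u+m)) = r^2 - u^2 by rw [hrdef, hmdef]; ring,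
      show u+m-x = -((x-m)-u) by ring, div_neg]
  rw [intervalIntegral.integral_congr (fun u _ => heq u), intervalIntegral.integral_neg,
    Kint r (x-m) hr (by rw [hrdef, hmdef]; linarith)]
  rw [show (x-m)^2 - r^2 = (x-a)*(x-b) by rw [hrdef, hmdef]; ring]
  ring

lemma J0int (a b : ℝ) (ha : 0 ≤ a) (hab : a < b) :
    ∫ l in a..b, Real.sqrt ((l-a)*(b-l)) / l
      = Real.pi * ((a+b)/2 - Real.sqrt (a*b)) := by
  set r := (b-a)/2 with hrdef
  set m := (a+b)/2 with hmdef
  have hr : 0 < r := by rw [hrdef]; linarith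
  have hshift : (∫ l in a..b, Real.sqrt ((l-a)*(b-l)) / l)
      = ∫ u in (-r)..r, Real.sqrt ((u+m-a)*(b-(u+m))) / (u+m) := by
    rw [intervalIntegral.integral_comp_add_right (fun l => Real.sqrt ((l-a)*(b-l)) / l) m]
    congr 1 <;> (rw [hrdef, hmdef]; ring)
  rw [hshift]
  have heq : ∀ u : ℝ, Real.sqrt ((u+m-a)*(b-(u+m))) / (u+m)
      = (fun v => Real.sqrt (r^2-v^2) / (m - v)) (-u) := by
    intro u
    simp only []
    rw [show (u+m-a)*(b-(u+m)) = r^2 - (-u)^2 by rw [hrdef, hmdef]; ring,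
      show u+m = m - -u by ring]
  rw [intervalIntegral.integral_congr (fun u _ => heq u),
    intervalIntegral.integral_comp_neg (fun v => Real.sqrt (r^2-v^2) / (m - v))]
  rw [neg_neg, Kint r m hr (by rw [hrdef, hmdef]; linarith),
    show m^2 - r^2 = a*b by rw [hrdef, hmdef]; ring]

lemma JintInt (a b x : ℝ) (hab : a < b) (hx : b < x) :
    IntervalIntegrable (fun l => Real.sqrt ((l-a)*(b-l)) / (l-x)) volume a b := by
  apply ContinuousOn.intervalIntegrable
  apply ContinuousOn.div
  · exact (Real.continuous_sqrt.comp (by continuity)).continuousOn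
  · exact (continuous_id.sub continuous_const).continuousOn
  · intro l hl
    rw [Set.uIcc_of_le hab.le] at hl
    have := hl.2
    intro h; have := sub_eq_zero.mp h; linarith

lemma J0intInt (a b : ℝ) (ha : 0 ≤ a) (hab : a < b) :
    IntervalIntegrable (fun l => Real.sqrt ((l-a)*(b-l)) / l) volume a b := by
  set r := (b-a)/2 with hrdef
  set m := (a+b)/2 with hmdef
  have hr : 0 < r := by rw [hrdef]; linarith
  have hrm : r ≤ m := by rw [hrdef, hmdef]; linarith
  have h1 : IntervalIntegrable (fun u => Real.sqrt (r^2 - u^2) / (m - u)) volume (-r) r :=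
    KintInt r m hr hrm
  have h2 : IntervalIntegrable (fun u => Real.sqrt (r^2 - u^2) / (m + u)) volume (-r) r := by
    have h3 := (h1.comp_sub_left 0).symm
    simpa [zero_sub, neg_sq, sub_neg_eq_add] using h3
  have h4 := h2.comp_sub_right m
  have hfun : (fun l => Real.sqrt ((l-a)*(b-l))/l)
      = fun l => Real.sqrt (r^2 - (l - m)^2)/(m + (l - m)) := by
    funext l
    rw [show (l-a)*(b-l) = r^2 - (l-m)^2 by rw [hrdef, hmdef]; ring,
      show m + (l - m) = l by ring]
  rw [hfun]
  have ea : a = -r + m := by rw [hrdef, hmdef]; ring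
  have eb : b = r + m := by rw [hrdef, hmdef]; ring
  rw [ea, eb]
  exact h4

/-- Closed form of the MP Stieltjes transform to the right of the bulk. -/
noncomputable def mpM (s c : ℝ) (x : ℝ) : ℝ :=
  (s*(1-c) - x + Real.sqrt ((x - s*(1 - Real.sqrt c)^2)*(x - s*(1 + Real.sqrt c)^2)))
    / (2*s*c*x)

lemma mp_closed (s c : ℝ) (hs : 0 < s) (hc : 0 < c) (x : ℝ)
    (hx : s*(1 + Real.sqrt c)^2 < x) :
    mpStieltjes s c (x : ℂ) = ((mpM s c x : ℝ) : ℂ) := by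
  set a := s*(1 - Real.sqrt c)^2 with hadef
  set b := s*(1 + Real.sqrt c)^2 with hbdef
  have hsc : 0 < Real.sqrt c := Real.sqrt_pos.2 hc
  have ha : 0 ≤ a := by positivity
  have hab : a < b := by rw [hadef, hbdef]; nlinarith
  have hb : 0 < b := by positivity
  have hx0 : 0 < x := lt_trans hb hx
  have hcsq : Real.sqrt c ^ 2 = c := Real.sq_sqrt hc.le
  -- step A : reduce the complex integral to a real one
  have hcast : ∀ l : ℝ, (↑(Real.sqrt ((l-a)*(b-l))/(2*Real.pi*s*c*l)) : ℂ) * (1/((l:ℂ) - (x:ℂ)))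
      = ((Real.sqrt ((l-a)*(b-l))/(2*Real.pi*s*c*l) * (1/(l - x)) : ℝ) : ℂ) := by
    intro l; push_cast; ring
  rw [mpStieltjes]
  simp only [← hadef, ← hbdef]
  simp only [hcast]
  rw [intervalIntegral.integral_ofReal]
  rw [show ((max (1 - 1/c) 0 : ℝ) : ℂ) / (x:ℂ) = ((max (1 - 1/c) 0 / x : ℝ) : ℂ) by push_cast; ring]
  rw [← Complex.ofReal_sub]
  congr 1
  -- step B : compute the real integral
  have hsplit : Set.EqOn
      (fun l => Real.sqrt ((l-a)*(b-l))/(2*Real.pi*s*c*l) * (1/(l - x)))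
      (fun l => (1/(2*Real.pi*s*c*x)) *
        (Real.sqrt ((l-a)*(b-l))/(l-x) - Real.sqrt ((l-a)*(b-l))/l))
      (Set.uIcc a b) := by
    intro l hl
    rw [Set.uIcc_of_le hab.le] at hl
    obtain ⟨hl1, hl2⟩ := hl
    by_cases hl0 : l = 0
    · have ha0 : a = 0 := le_antisymm (hl0 ▸ hl1) ha
      subst hl0
      simp [ha0]
    · have hlx : l - x ≠ 0 := by intro h; have := sub_eq_zero.mp h; linarith
      simp only []
      field_simp
      ring
  rw [intervalIntegral.integral_congr hsplit, intervalIntegral.integral_const_mul,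
    intervalIntegral.integral_sub (JintInt a b x hab hx) (J0intInt a b ha hab),
    Jint a b x hab hx.le, J0int a b ha hab]
  -- step C : arithmetic
  have habm : a + b = 2*s*(1+c) := by
    rw [hadef, hbdef]; nlinarith
  have habp : a*b = (s*(1-c))^2 := by
    have e : (1-Real.sqrt c)^2*(1+Real.sqrt c)^2 = (1 - Real.sqrt c^2)^2 := by ring
    rw [hadef, hbdef]
    rw [show s*(1-Real.sqrt c)^2*(s*(1+Real.sqrt c)^2)
      = s^2*((1-Real.sqrt c)^2*(1+Real.sqrt c)^2) by ring, e, hcsq]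
    ring
  rw [habm, habp]
  rcases le_or_gt c 1 with hc1 | hc1
  · have hmax : max (1 - 1/c) 0 = 0 := by
      apply max_eq_right
      rw [sub_nonpos, le_div_iff₀ hc]; linarith
    have hS : Real.sqrt ((s*(1-c))^2) = s*(1-c) := Real.sqrt_sq (by nlinarith)
    rw [hmax, hS, mpM]
    field_simp
    ring
  · have hmax : max (1 - 1/c) 0 = 1 - 1/c := by
      apply max_eq_left
      rw [sub_nonneg, div_le_iff₀ hc]; linarith
    have hS : Real.sqrt ((s*(1-c))^2) = s*(c-1) := by
      rw [show (s*(1-c))^2 = (s*(c-1))^2 by ring]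
      exact Real.sqrt_sq (by nlinarith)
    rw [hmax, hS, mpM]
    field_simp
    ring

theorem mp_derivatives_at_phi' (s c γ : ℝ) (hs : 0 < s) (hc : 0 < c)
    (hγ : s * Real.sqrt c < γ) :
    HasDerivAt (fun x : ℝ => mpStieltjes s c (x : ℂ))
      (((γ ^ 2 / ((γ + s * c) ^ 2 * (γ ^ 2 - s ^ 2 * c))) : ℝ) : ℂ)
      ((γ + s) * (γ + s * c) / γ) ∧
    HasDerivAt (fun x : ℝ => mpMtilde s c (x : ℂ))
      (((γ ^ 2 / ((γ + s) ^ 2 * (γ ^ 2 - s ^ 2 * c))) : ℝ) : ℂ)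
      ((γ + s) * (γ + s * c) / γ) ∧
    HasDerivAt (fun x : ℝ => mpTau s c (x : ℂ))
      (((-(1 / (γ ^ 2 - s ^ 2 * c))) : ℝ) : ℂ)
      ((γ + s) * (γ + s * c) / γ) := by
  have hsc : 0 < Real.sqrt c := Real.sqrt_pos.2 hc
  have hcsq : Real.sqrt c ^ 2 = c := Real.sq_sqrt hc.le
  have hγ0 : 0 < γ := lt_trans (by positivity) hγ
  have hden : 0 < γ^2 - s^2*c := by
    nlinarith [mul_pos (sub_pos.mpr hγ) (show (0:ℝ) < γ + s*Real.sqrt c by positivity), hcsq]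
  set xg := (γ + s) * (γ + s * c) / γ with hxgdef
  have hxg0 : 0 < xg := by
    rw [hxgdef]; positivity
  set a := s*(1 - Real.sqrt c)^2 with hadef
  set b := s*(1 + Real.sqrt c)^2 with hbdef
  -- x_γ lies strictly to the right of the bulk
  have hxb : b < xg := by
    have e : γ*(xg - b) = (γ - s*Real.sqrt c)^2 := by
      have hx1 : γ * xg = (γ+s)*(γ+s*c) := by rw [hxgdef]; field_simp
      rw [mul_sub, hx1, hbdef]
      linear_combination (-(γ*s + s^2))*hcsq
    nlinarith [sq_nonneg (γ - s*Real.sqrt c), e, mul_pos hγ0 (sub_pos.mpr hγ)]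
  -- the quadratic under the square root, with √c eliminated
  have hprod : ∀ y : ℝ, (y - a)*(y - b) = y^2 - 2*s*(1+c)*y + s^2*(1-c)^2 := by
    intro y
    rw [hadef, hbdef]
    linear_combination (-2*s*y - s^2*(2 - Real.sqrt c^2 - c))*hcsq
  have hsum : (xg - b) + (xg - a) = 2*xg - 2*s*(1+c) := by
    rw [hadef, hbdef]
    linear_combination (-2*s)*hcsq
  have hqval : (xg - a)*(xg - b) = ((γ^2 - s^2*c)/γ)^2 := by
    rw [hprod, hxgdef]
    field_simp
    ring
  have hqpos : 0 < (xg - a)*(xg - b) := by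
    rw [hqval]; positivity
  have hsqrt : Real.sqrt ((xg - a)*(xg - b)) = (γ^2 - s^2*c)/γ := by
    rw [hqval, Real.sqrt_sq (by positivity)]
  -- value of mpM at x_γ
  have hMval : mpM s c xg = -1/(γ + s*c) := by
    rw [mpM, ← hadef, ← hbdef, hsqrt]
    rw [div_eq_div_iff
      (mul_ne_zero (mul_ne_zero (mul_ne_zero two_ne_zero hs.ne') hc.ne') hxg0.ne')
      (show (γ + s*c) ≠ 0 by positivity)]
    rw [hxgdef]
    field_simp
    ring
  -- derivative of mpM at x_γ
  set D : ℝ := γ ^ 2 / ((γ + s * c) ^ 2 * (γ ^ 2 - s ^ 2 * c)) with hDdef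
  have hMderiv : HasDerivAt (mpM s c) D xg := by
    have hinner : HasDerivAt (fun y : ℝ => (y - a)*(y - b)) ((xg - b) + (xg - a)) xg := by
      have h1 := ((hasDerivAt_id' xg).sub_const a).mul ((hasDerivAt_id' xg).sub_const b)
      exact h1.congr_deriv (by ring)
    have hsq : HasDerivAt (fun y : ℝ => Real.sqrt ((y - a)*(y - b)))
        (1/(2*Real.sqrt ((xg - a)*(xg - b))) * ((xg - b) + (xg - a))) xg :=
      (Real.hasDerivAt_sqrt hqpos.ne').comp xg hinner
    have hnum : HasDerivAt (fun y : ℝ => s*(1-c) - y + Real.sqrt ((y - a)*(y - b)))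
        (-1 + 1/(2*Real.sqrt ((xg - a)*(xg - b))) * ((xg - b) + (xg - a))) xg := by
      have := ((hasDerivAt_const xg (s*(1-c))).sub (hasDerivAt_id xg)).add hsq
      exact this.congr_deriv (by ring)
    have hden2 : HasDerivAt (fun y : ℝ => 2*s*c*y) (2*s*c) xg := by
      simpa using (hasDerivAt_id xg).const_mul (2*s*c)
    have hM := hnum.div hden2
      (mul_ne_zero (mul_ne_zero (mul_ne_zero two_ne_zero hs.ne') hc.ne') hxg0.ne')
    have hfun : (fun y : ℝ => (s*(1-c) - y + Real.sqrt ((y - a)*(y - b)))/(2*s*c*y))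
        = mpM s c := by
      funext y
      rw [mpM, ← hadef, ← hbdef]
    rw [← hfun]
    refine hM.congr_deriv ?_
    rw [hsqrt, hsum, hDdef, hxgdef]
    rw [div_eq_div_iff (by positivity) (by positivity)]
    field_simp
    try ring
  -- the real auxiliary functions
  set Mt : ℝ → ℝ := fun y => -1/(y*(1 + s*c*mpM s c y)) with hMtdef
  set Tau : ℝ → ℝ := fun y => y * mpM s c y * Mt y with hTaudef
  have hDenVal : xg*(1 + s*c*mpM s c xg) = γ + s := by
    rw [hMval, hxgdef]
    field_simp
    try ring
  have hDen0 : xg*(1 + s*c*mpM s c xg) ≠ 0 := by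
    rw [hDenVal]; positivity
  have hDenD : HasDerivAt (fun y : ℝ => y*(1 + s*c*mpM s c y))
      (1*(1 + s*c*mpM s c xg) + xg*(s*c*D)) xg :=
    (hasDerivAt_id xg).mul ((hMderiv.const_mul (s*c)).const_add 1)
  set D2 : ℝ := γ ^ 2 / ((γ + s) ^ 2 * (γ ^ 2 - s ^ 2 * c)) with hD2def
  have hMtderiv : HasDerivAt Mt D2 xg := by
    have h1 := (hasDerivAt_const xg (-1:ℝ)).div hDenD hDen0
    rw [hMtdef]
    refine h1.congr_deriv ?_
    rw [hDenVal, hMval, hDdef, hD2def, hxgdef]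
    rw [div_eq_div_iff (by positivity) (by positivity)]
    field_simp
    try ring
  have hMtVal : Mt xg = -1/(γ + s) := by
    rw [hMtdef]
    simp only []
    rw [hDenVal]
  have hTauderiv : HasDerivAt Tau (-(1 / (γ ^ 2 - s ^ 2 * c))) xg := by
    have h1 := ((hasDerivAt_id' xg).mul hMderiv).mul hMtderiv
    rw [hTaudef]
    refine h1.congr_deriv ?_
    simp only [Pi.mul_apply]
    rw [hMval, hMtVal, hDdef, hD2def, hxgdef]
    field_simp
    ring
  -- lift everything to ℂ through the closed form
  have hnhds : ∀ᶠ y in nhds xg, y ∈ Set.Ioi b := isOpen_Ioi.eventually_mem hxb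
  have hev1 : (fun y : ℝ => mpStieltjes s c (y:ℂ)) =ᶠ[nhds xg]
      fun y : ℝ => ((mpM s c y : ℝ) : ℂ) :=
    hnhds.mono fun y hy => mp_closed s c hs hc y hy
  have hev2 : (fun y : ℝ => mpMtilde s c (y:ℂ)) =ᶠ[nhds xg]
      fun y : ℝ => ((Mt y : ℝ) : ℂ) := by
    refine hnhds.mono fun y hy => ?_
    simp only [mpMtilde]
    rw [mp_closed s c hs hc y hy, hMtdef]
    push_cast
    ring
  have hev3 : (fun y : ℝ => mpTau s c (y:ℂ)) =ᶠ[nhds xg]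
      fun y : ℝ => ((Tau y : ℝ) : ℂ) := by
    refine hnhds.mono fun y hy => ?_
    simp only [mpTau, mpMtilde]
    rw [mp_closed s c hs hc y hy, hTaudef, hMtdef]
    push_cast
    ring
  refine ⟨?_, ?_, ?_⟩
  · exact (hMderiv.ofReal_comp).congr_of_eventuallyEq hev1
  · exact (hMtderiv.ofReal_comp).congr_of_eventuallyEq hev2
  · exact (hTauderiv.ofReal_comp).congr_of_eventuallyEq hev3

/-- for `γ > σ²√c` and `x_γ = (γ + σ²)(γ + σ²c)/γ`, the real functions
`x ↦ m(x)`, `x ↦ m̃(x)` and `x ↦ τ(x)` are differentiable at `x_γ` with derivatives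
`γ²/((γ + σ²c)²(γ² − σ⁴c))`, `γ²/((γ + σ²)²(γ² − σ⁴c))` and `−1/(γ² − σ⁴c)` respectively. -/
theorem mp_derivatives_at_phi (s c γ : ℝ) (hs : 0 < s) (hc : 0 < c)
    (hγ : s * Real.sqrt c < γ) :
    HasDerivAt (fun x : ℝ => mpStieltjes s c (x : ℂ))
      (((γ ^ 2 / ((γ + s * c) ^ 2 * (γ ^ 2 - s ^ 2 * c))) : ℝ) : ℂ)
      ((γ + s) * (γ + s * c) / γ) ∧
    HasDerivAt (fun x : ℝ => mpMtilde s c (x : ℂ))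
      (((γ ^ 2 / ((γ + s) ^ 2 * (γ ^ 2 - s ^ 2 * c))) : ℝ) : ℂ)
      ((γ + s) * (γ + s * c) / γ) ∧
    HasDerivAt (fun x : ℝ => mpTau s c (x : ℂ))
      (((-(1 / (γ ^ 2 - s ^ 2 * c))) : ℝ) : ℂ)
      ((γ + s) * (γ + s * c) / γ) := by
  exact mp_derivatives_at_phi' s c γ hs hc hγ
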